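/- Any v ∈ ℝ^p in the cone G(S) = {v : ‖v_{S^c}‖₁ ≤ 3‖v_S‖₁} with ‖v‖₂ = 1 satisfies ‖v‖₁ ≤ 4√s, where s = |S|; consequently, if a symmetric matrix A satisfies |vᵀAv − vᵀBv| ≤ ‖A − B‖_max ‖v‖₁² for all v, and B obeys a restricted eigenvalue bound vᵀBv ≥ κ‖v‖₂² on G(S), then A obeys vᵀAv ≥ (κ − 16 s ‖A − B‖_max)‖v‖₂² on G(S). -/
import Mathlib

lemma cone_sq_l1 {p : ℕ} (S : Finset (Fin p)) (v : Fin p → ℝ)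
    (hcone : (∑ i ∈ Sᶜ, |v i|) ≤ 3 * ∑ i ∈ S, |v i|) :
    (∑ i, |v i|)^2 ≤ 16 * S.card * ∑ i, (v i)^2 := by
  have hsplit : (∑ i, |v i|) = (∑ i ∈ S, |v i|) + ∑ i ∈ Sᶜ, |v i| :=
    (Finset.sum_add_sum_compl S _).symm
  have h1 : (∑ i, |v i|) ≤ 4 * ∑ i ∈ S, |v i| := by rw [hsplit]; linarith
  have h2 : (∑ i ∈ S, |v i|)^2 ≤ S.card * ∑ i ∈ S, (v i)^2 := by
    simpa using sq_sum_le_card_mul_sum_sq (s := S) (f := fun i => |v i|)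
  have h3 : (∑ i ∈ S, (v i)^2) ≤ ∑ i, (v i)^2 :=
    Finset.sum_le_sum_of_subset_of_nonneg (Finset.subset_univ S)
      (fun i _ _ => sq_nonneg _)
  have hnn : 0 ≤ ∑ i ∈ S, |v i| := Finset.sum_nonneg fun i _ => abs_nonneg _
  have hnn2 : 0 ≤ ∑ i, |v i| := Finset.sum_nonneg fun i _ => abs_nonneg _
  calc (∑ i, |v i|)^2 ≤ (4 * ∑ i ∈ S, |v i|)^2 := by
        apply pow_le_pow_left₀ hnn2 h1
    _ = 16 * (∑ i ∈ S, |v i|)^2 := by ring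
    _ ≤ 16 * (S.card * ∑ i ∈ S, (v i)^2) := by linarith
    _ ≤ 16 * S.card * ∑ i, (v i)^2 := by
        rw [mul_assoc]
        have : (S.card : ℝ) * ∑ i ∈ S, (v i)^2 ≤ S.card * ∑ i, (v i)^2 :=
          mul_le_mul_of_nonneg_left h3 (Nat.cast_nonneg _)
        linarith

/-- (i) Any unit-ℓ₂ vector in the cone `G(S)` satisfies `‖v‖₁ ≤ 4√s`;
(ii) consequently, if a symmetric matrix `A` satisfies
`|vᵀAv − vᵀBv| ≤ c‖v‖₁²` for all `v` (with `c = ‖A − B‖_max`), and `B` obeys a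
restricted eigenvalue bound `vᵀBv ≥ κ‖v‖₂²` on `G(S)`, then `A` obeys
`vᵀAv ≥ (κ − 16 s c)‖v‖₂²` on `G(S)`. -/
theorem cone_l1_bound_and_RE_transfer
    {p : ℕ} (S : Finset (Fin p)) (A B : Matrix (Fin p) (Fin p) ℝ)
    (hA : A.IsSymm) (hB : B.IsSymm)
    (c κ : ℝ) (hc : 0 ≤ c)
    (hcdef : ∀ i j, |A i j - B i j| ≤ c)
    (hquad : ∀ v : Fin p → ℝ,
      |(∑ i, ∑ j, v i * A i j * v j) - (∑ i, ∑ j, v i * B i j * v j)|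
        ≤ c * (∑ i, |v i|)^2)
    (hRE : ∀ v : Fin p → ℝ, (∑ i ∈ Sᶜ, |v i|) ≤ 3 * ∑ i ∈ S, |v i| →
      κ * ∑ i, (v i)^2 ≤ ∑ i, ∑ j, v i * B i j * v j) :
    (∀ v : Fin p → ℝ, (∑ i ∈ Sᶜ, |v i|) ≤ 3 * ∑ i ∈ S, |v i| →
      Real.sqrt (∑ i, (v i)^2) = 1 →
      (∑ i, |v i|) ≤ 4 * Real.sqrt (S.card)) ∧
    (∀ v : Fin p → ℝ, (∑ i ∈ Sᶜ, |v i|) ≤ 3 * ∑ i ∈ S, |v i| →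
      (κ - 16 * S.card * c) * ∑ i, (v i)^2 ≤ ∑ i, ∑ j, v i * A i j * v j) := by
  constructor
  · intro v hcone hnorm
    have key := cone_sq_l1 S v hcone
    have hsum1 : (∑ i, (v i)^2) = 1 := by
      have h0 : 0 ≤ ∑ i, (v i)^2 := Finset.sum_nonneg fun i _ => sq_nonneg _
      nlinarith [Real.sq_sqrt h0, hnorm]
    rw [hsum1, mul_one] at key
    have hnn2 : 0 ≤ ∑ i, |v i| := Finset.sum_nonneg fun i _ => abs_nonneg _
    have : (∑ i, |v i|) ≤ Real.sqrt (16 * S.card) := by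
      rw [show (∑ i, |v i|) = Real.sqrt ((∑ i, |v i|)^2) by
        rw [Real.sqrt_sq hnn2]]
      exact Real.sqrt_le_sqrt key
    calc (∑ i, |v i|) ≤ Real.sqrt (16 * S.card) := this
      _ = 4 * Real.sqrt (S.card) := by
          rw [show (16 : ℝ) * S.card = 4^2 * S.card by norm_num,
            Real.sqrt_mul (by positivity), Real.sqrt_sq (by norm_num)]
  · intro v hcone
    have key := cone_sq_l1 S v hcone
    have hq := hquad v
    have hre := hRE v hcone
    have h1 : (∑ i, ∑ j, v i * B i j * v j) - (∑ i, ∑ j, v i * A i j * v j)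
        ≤ c * (∑ i, |v i|)^2 := by
      have := abs_le.mp hq; linarith
    have h2 : c * (∑ i, |v i|)^2 ≤ c * (16 * S.card * ∑ i, (v i)^2) :=
      mul_le_mul_of_nonneg_left key hc
    nlinarith
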